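/- Let T be a (d₁,d₂)-biregular tree with d₁,d₂ ≥ 3 and Γ ≤ Aut(T) a geometrically finite tree lattice. Then the associated Markov chain (Mₙ) on EQ is positive recurrent, i.e. it admits a stationary probability measure. -/

import Mathlib

open Filter Topology MeasureTheory

attribute [local instance] Classical.propDecidable

namespace TreeDyn


variable {V : Type*}

/-- The type of directed edges of a simple graph. -/
def DEdge (T : SimpleGraph V) : Type _ := {p : V × V // T.Adj p.1 p.2}

/-- `T` is a `(d₁,d₂)`-biregular tree: a tree whose vertex set admits a bipartition such
that every vertex of one class has degree `d₁` and every vertex of the other class has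
degree `d₂`. -/
def IsBiregularTree (T : SimpleGraph V) (d₁ d₂ : ℕ) : Prop :=
  T.Connected ∧ T.IsAcyclic ∧
    ∃ c : V → Bool,
      (∀ u v, T.Adj u v → c u ≠ c v) ∧
      (∀ v, c v = true → Nat.card (T.neighborSet v) = d₁) ∧
      (∀ v, c v = false → Nat.card (T.neighborSet v) = d₂)

/-- A permutation of the vertices is an automorphism of `T` acting without edge
inversion if it preserves adjacency and moves every vertex an even distance. -/
def IsTreeAut (T : SimpleGraph V) (σ : Equiv.Perm V) : Prop :=
  (∀ u v, T.Adj (σ u) (σ v) ↔ T.Adj u v) ∧ ∀ v, Even (T.dist v (σ v))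

variable (T : SimpleGraph V) (Λ : Subgroup (Equiv.Perm V))

/-- Two vertices are related if they lie in the same `Λ`-orbit. -/
def vrel (u v : V) : Prop := ∃ γ ∈ Λ, γ u = v

/-- The vertex set of the quotient graph `Q = Λ∖T`. -/
def VQ := Quot (vrel Λ)

/-- Projection of vertices to the quotient graph. -/
def πV : V → VQ Λ := Quot.mk _

/-- Two directed edges are related if they lie in the same `Λ`-orbit. -/
def erel (e f : DEdge T) : Prop :=
  ∃ γ ∈ Λ, γ e.1.1 = f.1.1 ∧ γ e.1.2 = f.1.2

/-- The directed edge set of the quotient graph `Q = Λ∖T`. -/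
def EQ := Quot (erel T Λ)

/-- Projection of directed edges to the quotient graph. -/
def πE : DEdge T → EQ T Λ := Quot.mk _

/-- The initial vertex `∂₀ e` of a quotient edge. -/
noncomputable def tailQ (e : EQ T Λ) : VQ Λ := πV Λ (Quot.out e).1.1

/-- The terminal vertex `∂₁ e` of a quotient edge. -/
noncomputable def headQ (e : EQ T Λ) : VQ Λ := πV Λ (Quot.out e).1.2

/-- The reversal `ē` of a quotient edge. -/
noncomputable def barQ (e : EQ T Λ) : EQ T Λ :=
  πE T Λ ⟨((Quot.out e).1.2, (Quot.out e).1.1), (Quot.out e).2.symm⟩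

/-- The order of the stabilizer of a vertex in `Λ`. -/
noncomputable def stabV (v : V) : ℕ :=
  Nat.card {γ : Λ // (γ : Equiv.Perm V) v = v}

/-- The order of the pointwise stabilizer of a directed edge in `Λ`. -/
noncomputable def stabE (e : DEdge T) : ℕ :=
  Nat.card {γ : Λ // (γ : Equiv.Perm V) e.1.1 = e.1.1 ∧ (γ : Equiv.Perm V) e.1.2 = e.1.2}

/-- The index map of the edge-indexed graph: `ind e = [Λ_{∂₀ẽ} : Λ_ẽ]` for any lift `ẽ`. -/
noncomputable def indQ (e : EQ T Λ) : ℕ :=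
  stabV Λ (Quot.out e).1.1 / stabE T Λ (Quot.out e)

/-- The degree of a vertex of the quotient graph: the degree in `T` of any of its lifts. -/
noncomputable def degQ (v : VQ Λ) : ℕ := Nat.card (T.neighborSet (Quot.out v))

/-- `Δ(e) = ind(ē)/ind(e)`. -/
noncomputable def deltaQ (e : EQ T Λ) : ℝ :=
  (indQ T Λ (barQ T Λ e) : ℝ) / (indQ T Λ e : ℝ)

/-- `Λ` is a tree lattice: a discrete subgroup (finite vertex stabilizers) of `Aut T`
with finite covolume, i.e. `Σ_{v ∈ VQ} N_o(v)⁻¹ < ∞` where `N_o` is the multiplicative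
function along paths determined by `Δ`. -/
def IsTreeLattice : Prop :=
  (∀ γ ∈ Λ, IsTreeAut T γ) ∧
  (∀ v : V, Finite {γ : Λ // (γ : Equiv.Perm V) v = v}) ∧
  ∃ (o : VQ Λ) (N : VQ Λ → ℝ),
    N o = 1 ∧ (∀ v, 0 < N v) ∧
    (∀ e : EQ T Λ, N (headQ T Λ e) = deltaQ T Λ e * N (tailQ T Λ e)) ∧
    Summable (fun v : VQ Λ => (N v)⁻¹)

/-- The transition kernel of the Markov chain associated to `Λ` on the directed edges
of the quotient graph. -/
noncomputable def kerP (e f : EQ T Λ) : ℝ :=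
  if headQ T Λ e = tailQ T Λ f then
    (if f = barQ T Λ e then ((indQ T Λ f : ℝ) - 1) else (indQ T Λ f : ℝ)) /
      ((degQ T Λ (headQ T Λ e) : ℝ) - 1)
  else 0

/-- The `n`-step transition kernel. -/
noncomputable def kerPn : ℕ → EQ T Λ → EQ T Λ → ℝ
  | 0, e, f => if e = f then 1 else 0
  | n + 1, e, f => ∑' g : EQ T Λ, kerPn n e g * kerP T Λ g f

/-- Adjacency in the quotient graph. -/
def AdjQ (u v : VQ Λ) : Prop :=
  ∃ e : EQ T Λ, tailQ T Λ e = u ∧ headQ T Λ e = v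

/-- Graph distance on the quotient graph. -/
noncomputable def distQ (u v : VQ Λ) : ℕ :=
  sInf {n : ℕ | ∃ f : ℕ → VQ Λ, f 0 = u ∧ f n = v ∧ ∀ i < n, AdjQ T Λ (f i) (f (i + 1))}

/-- Distance from a finite set of vertices of the quotient graph. -/
noncomputable def distToF (F : Finset (VQ Λ)) (v : VQ Λ) : ℕ :=
  sInf {n : ℕ | ∃ u ∈ F, distQ T Λ u v = n}

/-- `F` is a finite part for `Λ`: the complement of `F` in the quotient graph is a
disjoint union of finitely many open Nagao rays. -/
def IsFinitePart (F : Finset (VQ Λ)) : Prop :=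
  ∃ (k : ℕ) (ray : Fin k → ℕ → VQ Λ),
    (∀ v : VQ Λ, v ∉ F ↔ ∃ i n, ray i n = v) ∧
    (∀ i n j m, ray i n = ray j m → i = j ∧ n = m) ∧
    (∀ i n, ∃ e : EQ T Λ, tailQ T Λ e = ray i n ∧ headQ T Λ e = ray i (n + 1)) ∧
    (∀ i n, ∀ e f : EQ T Λ, tailQ T Λ e = ray i n → headQ T Λ e = ray i (n + 1) →
      tailQ T Λ f = ray i n → headQ T Λ f = ray i (n + 1) → e = f) ∧
    (∀ i n, ∀ e : EQ T Λ, tailQ T Λ e = ray i n → headQ T Λ e ∉ F →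
      headQ T Λ e = ray i (n + 1) ∨ ∃ m, n = m + 1 ∧ headQ T Λ e = ray i m) ∧
    (∀ i n, ∀ e : EQ T Λ, tailQ T Λ e = ray i n → headQ T Λ e = ray i (n + 1) →
      indQ T Λ e = 1) ∧
    (∀ i n, ∀ e : EQ T Λ, tailQ T Λ e = ray i (n + 1) → headQ T Λ e = ray i n →
      indQ T Λ e = degQ T Λ (ray i n) - 1)

/-- A tree lattice is geometrically finite if its quotient graph contains a nonempty
finite subgraph whose complement is a disjoint union of finitely many open Nagao rays. -/
def IsGeomFinite : Prop := ∃ F : Finset (VQ Λ), F.Nonempty ∧ IsFinitePart T Λ F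

/-- The mass that the projection to `VQ` of the uniform measure on the sphere
`S(vb,n)` gives to the vertex `q` of the quotient graph. -/
noncomputable def sphPush (vb : V) (n : ℕ) (q : VQ Λ) : ℝ :=
  (Nat.card {w : V // T.dist vb w = n ∧ πV Λ w = q} : ℝ) /
    (Nat.card {w : V // T.dist vb w = n} : ℝ)

/-- `ℙ_e(τ = i)` : the probability that the Markov chain started at `e` hits the set of
edges with terminal vertex in `F` for the first time at time `i`. -/
noncomputable def hitP (F : Finset (VQ Λ)) : ℕ → EQ T Λ → ℝ
  | 0, e => if headQ T Λ e ∈ F then 1 else 0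
  | i + 1, e => if headQ T Λ e ∈ F then 0 else ∑' f : EQ T Λ, kerP T Λ e f * hitP F i f

/-- `ℙ_e(τ' = i)` where `τ' = min {n | n ≥ τ, 2 ∣ n}`. -/
noncomputable def hitP' (F : Finset (VQ Λ)) (i : ℕ) (e : EQ T Λ) : ℝ :=
  if 2 ∣ i then hitP T Λ F i e + (if 1 ≤ i then hitP T Λ F (i - 1) e else 0) else 0

/-- `(Ω₀, Ω₁)` is the pair of cyclic classes of the (period two) kernel `P`. -/
def IsCyclicPair (Ω₀ Ω₁ : Set (EQ T Λ)) : Prop :=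
  (∀ e, e ∈ Ω₀ ∨ e ∈ Ω₁) ∧ (∀ e, ¬(e ∈ Ω₀ ∧ e ∈ Ω₁)) ∧
  (∀ e ∈ Ω₀, ∀ f, kerP T Λ e f ≠ 0 → f ∈ Ω₁) ∧
  (∀ e ∈ Ω₁, ∀ f, kerP T Λ e f ≠ 0 → f ∈ Ω₀)

/-- `Ω` is a cyclic class of the kernel `P`. -/
def IsCyclicClass (Ω : Set (EQ T Λ)) : Prop :=
  ∃ Ω', IsCyclicPair T Λ Ω Ω' ∨ IsCyclicPair T Λ Ω' Ω



theorem vrel_equivalence : Equivalence (vrel Λ) where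
  refl x := ⟨1, Λ.one_mem, rfl⟩
  symm := by
    rintro x y ⟨γ, hγ, rfl⟩
    exact ⟨γ⁻¹, Λ.inv_mem hγ, Equiv.symm_apply_apply γ x⟩
  trans := by
    rintro x y z ⟨γ, hγ, rfl⟩ ⟨δ, hδ, rfl⟩
    exact ⟨δ * γ, Λ.mul_mem hδ hγ, Equiv.Perm.mul_apply δ γ x⟩

theorem erel_equivalence : Equivalence (erel T Λ) where
  refl e := ⟨1, Λ.one_mem, rfl, rfl⟩
  symm := by
    rintro e f ⟨γ, hγ, h1, h2⟩
    exact ⟨γ⁻¹, Λ.inv_mem hγ, by rw [← h1, Equiv.Perm.coe_inv, Equiv.symm_apply_apply],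
      by rw [← h2, Equiv.Perm.coe_inv, Equiv.symm_apply_apply]⟩
  trans := by
    rintro e f g ⟨γ, hγ, h1, h2⟩ ⟨δ, hδ, h3, h4⟩
    exact ⟨δ * γ, Λ.mul_mem hδ hγ, by rw [Equiv.Perm.mul_apply, h1, h3],
      by rw [Equiv.Perm.mul_apply, h2, h4]⟩

theorem πV_eq_iff {x y : V} : πV Λ x = πV Λ y ↔ vrel Λ x y :=
  Quot.eq.trans (vrel_equivalence Λ).eqvGen_iff

theorem πE_eq_iff {x y : DEdge T} : πE T Λ x = πE T Λ y ↔ erel T Λ x y :=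
  Quot.eq.trans (erel_equivalence T Λ).eqvGen_iff

theorem πV_out (v : VQ Λ) : πV Λ (Quot.out v) = v := Quot.out_eq v
theorem πE_out (e : EQ T Λ) : πE T Λ (Quot.out e) = e := Quot.out_eq e

theorem erel_out (e : DEdge T) : erel T Λ (Quot.out (πE T Λ e)) e :=
  (πE_eq_iff T Λ).1 (πE_out T Λ (πE T Λ e))

theorem tailQ_πE (e : DEdge T) : tailQ T Λ (πE T Λ e) = πV Λ e.1.1 := by
  obtain ⟨γ, hγ, h1, h2⟩ := erel_out T Λ e
  exact (πV_eq_iff Λ).2 ⟨γ, hγ, h1⟩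

theorem headQ_πE (e : DEdge T) : headQ T Λ (πE T Λ e) = πV Λ e.1.2 := by
  obtain ⟨γ, hγ, h1, h2⟩ := erel_out T Λ e
  exact (πV_eq_iff Λ).2 ⟨γ, hγ, h2⟩

def revE (e : DEdge T) : DEdge T := ⟨(e.1.2, e.1.1), e.2.symm⟩

theorem erel_rev {e f : DEdge T} (h : erel T Λ e f) : erel T Λ (revE T e) (revE T f) := by
  obtain ⟨γ, hγ, h1, h2⟩ := h
  exact ⟨γ, hγ, h2, h1⟩

theorem revE_revE (e : DEdge T) : revE T (revE T e) = e := Subtype.ext rfl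

theorem barQ_πE (e : DEdge T) : barQ T Λ (πE T Λ e) = πE T Λ (revE T e) :=
  (πE_eq_iff T Λ).2 (erel_rev T Λ (erel_out T Λ e))

theorem barQ_barQ (e : EQ T Λ) : barQ T Λ (barQ T Λ e) = e := by
  conv_lhs => rw [← πE_out T Λ e]
  rw [barQ_πE, barQ_πE, revE_revE, πE_out]

theorem tailQ_barQ (e : EQ T Λ) : tailQ T Λ (barQ T Λ e) = headQ T Λ e := by
  conv_lhs => rw [← πE_out T Λ e]
  rw [barQ_πE, tailQ_πE]
  conv_rhs => rw [← πE_out T Λ e]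
  rw [headQ_πE]
  rfl

theorem headQ_barQ (e : EQ T Λ) : headQ T Λ (barQ T Λ e) = tailQ T Λ e := by
  conv_lhs => rw [← πE_out T Λ e]
  rw [barQ_πE, headQ_πE]
  conv_rhs => rw [← πE_out T Λ e]
  rw [tailQ_πE]
  rfl

theorem barQ_inj : Function.Injective (barQ T Λ) := fun a b h => by
  rw [← barQ_barQ T Λ a, h, barQ_barQ]

noncomputable def conjStabV (γ₀ : Λ) (x : V) :
    {γ : Λ // (γ : Equiv.Perm V) x = x} ≃
      {γ : Λ // (γ : Equiv.Perm V) ((γ₀ : Equiv.Perm V) x) = (γ₀ : Equiv.Perm V) x} :=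
  (MulAut.conj γ₀).toEquiv.subtypeEquiv fun γ => by
    simp [MulAut.conj_apply, Equiv.Perm.mul_apply]

noncomputable def conjStabE (γ₀ : Λ) (x y : V) :
    {γ : Λ // (γ : Equiv.Perm V) x = x ∧ (γ : Equiv.Perm V) y = y} ≃
      {γ : Λ // (γ : Equiv.Perm V) ((γ₀ : Equiv.Perm V) x) = (γ₀ : Equiv.Perm V) x ∧
        (γ : Equiv.Perm V) ((γ₀ : Equiv.Perm V) y) = (γ₀ : Equiv.Perm V) y} :=
  (MulAut.conj γ₀).toEquiv.subtypeEquiv fun γ => by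
    simp [MulAut.conj_apply, Equiv.Perm.mul_apply]

theorem stabV_eq {x y : V} (h : vrel Λ x y) : stabV Λ x = stabV Λ y := by
  obtain ⟨γ, hγ, rfl⟩ := h
  exact Nat.card_congr (conjStabV Λ ⟨γ, hγ⟩ x)

theorem stabE_eq {e f : DEdge T} (h : erel T Λ e f) : stabE T Λ e = stabE T Λ f := by
  obtain ⟨γ, hγ, h1, h2⟩ := h
  rw [stabE, stabE, ← h1, ← h2]
  exact Nat.card_congr (conjStabE Λ ⟨γ, hγ⟩ e.1.1 e.1.2)

noncomputable def φmap (v : VQ Λ) (w : T.neighborSet (Quot.out v)) :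
    {g : EQ T Λ // tailQ T Λ g = v} :=
  ⟨πE T Λ ⟨(Quot.out v, ↑w), w.2⟩, (tailQ_πE T Λ _).trans (πV_out Λ v)⟩

theorem φmap_surj (hAut : ∀ γ ∈ Λ, ∀ u w : V, T.Adj (γ u) (γ w) ↔ T.Adj u w) (v : VQ Λ) :
    Function.Surjective (φmap T Λ v) := by
  intro g
  have ht : πV Λ (Quot.out g.1).1.1 = πV Λ (Quot.out v) := g.2.trans (πV_out Λ v).symm
  obtain ⟨γ, hγ, hx⟩ := (πV_eq_iff Λ).1 ht
  have adj : T.Adj (Quot.out v) (γ (Quot.out g.1).1.2) := by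
    rw [← hx]
    exact (hAut γ hγ _ _).2 (Quot.out g.1).2
  refine ⟨⟨γ (Quot.out g.1).1.2, adj⟩, Subtype.ext ?_⟩
  show πE T Λ _ = g.1
  exact ((πE_eq_iff T Λ).2 ⟨γ, hγ, hx, rfl⟩).symm.trans (πE_out T Λ g.1)

theorem φmap_fiber_card (hAut : ∀ γ ∈ Λ, ∀ u w : V, T.Adj (γ u) (γ w) ↔ T.Adj u w)
    (hFin : ∀ x : V, Finite {γ : Λ // (γ : Equiv.Perm V) x = x})
    (v : VQ Λ) (g : {g : EQ T Λ // tailQ T Λ g = v}) :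
    Nat.card {w // φmap T Λ v w = g} = indQ T Λ g.1 := by
  classical
  set x := Quot.out v with hxdef
  obtain ⟨w₀, hw₀⟩ := φmap_surj T Λ hAut v g
  set u₀ : V := (w₀ : V) with hu₀
  have hπ : πE T Λ ⟨(x, u₀), w₀.2⟩ = g.1 := congrArg Subtype.val hw₀
  -- relate indQ to stabilizers at the chosen edge
  have herel : erel T Λ (Quot.out g.1) ⟨(x, u₀), w₀.2⟩ := by
    rw [← hπ]; exact erel_out T Λ _
  obtain ⟨γ₁, hγ₁, hx1, hx2⟩ := herel
  have hx1' : γ₁ (Quot.out g.1).1.1 = x := hx1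
  have hstabV : stabV Λ (Quot.out g.1).1.1 = stabV Λ x := by
    rw [← hx1']; exact stabV_eq Λ ⟨γ₁, hγ₁, rfl⟩
  have hstabE : stabE T Λ (Quot.out g.1) = stabE T Λ ⟨(x, u₀), w₀.2⟩ :=
    stabE_eq T Λ ⟨γ₁, hγ₁, hx1, hx2⟩
  -- the stabilizer of x in Λ, acting on V
  set G := MulAction.stabilizer Λ x with hG
  have eG : {γ : Λ // (γ : Equiv.Perm V) x = x} ≃ G :=
    Equiv.subtypeEquivRight fun γ => Iff.rfl
  haveI : Finite G := Finite.of_equiv _ eG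
  -- the stabilizer of u₀ in G is the edge stabilizer
  have eS : ↥(MulAction.stabilizer G u₀) ≃
      {γ : Λ // (γ : Equiv.Perm V) x = x ∧ (γ : Equiv.Perm V) u₀ = u₀} := by
    refine Equiv.ofBijective (fun δ => ⟨δ.1.1, δ.1.2, δ.2⟩) ⟨?_, ?_⟩
    · intro a b h
      simp only [Subtype.mk.injEq] at h
      exact Subtype.ext (Subtype.ext h)
    · rintro ⟨γ, h1, h2⟩
      exact ⟨⟨⟨γ, h1⟩, h2⟩, rfl⟩
  -- the fiber is the orbit of u₀ under G
  have eO : {w // φmap T Λ v w = g} ≃ ↥(MulAction.orbit G u₀) := by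
    refine Equiv.ofBijective (fun w => ⟨(w.1 : V), ?_⟩) ⟨?_, ?_⟩
    · have h' : πE T Λ ⟨(x, (w.1 : V)), w.1.2⟩ = πE T Λ ⟨(x, u₀), w₀.2⟩ := by
        rw [hπ]; exact congrArg Subtype.val w.2
      obtain ⟨δ, hδ, hδ1, hδ2⟩ := (πE_eq_iff T Λ).1 h'.symm
      exact MulAction.mem_orbit_iff.2 ⟨⟨⟨δ, hδ⟩, hδ1⟩, hδ2⟩
    · intro a b h
      simp only [Subtype.mk.injEq] at h
      exact Subtype.ext (Subtype.ext h)
    · rintro ⟨y, hy⟩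
      obtain ⟨δ, hδ⟩ := MulAction.mem_orbit_iff.1 hy
      have hδx : ((δ : Λ) : Equiv.Perm V) x = x := δ.2
      have hδu : ((δ : Λ) : Equiv.Perm V) u₀ = y := hδ
      have adj : T.Adj x y := by
        rw [← hδx, ← hδu]
        exact (hAut _ (δ : Λ).2 _ _).2 w₀.2
      have hφ : φmap T Λ v ⟨y, adj⟩ = g := by
        refine Subtype.ext ?_
        show πE T Λ ⟨(x, y), adj⟩ = g.1
        rw [← hπ]
        exact ((πE_eq_iff T Λ).2 ⟨(δ : Λ), (δ : Λ).2, hδx, hδu⟩).symm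
      exact ⟨⟨⟨y, adj⟩, hφ⟩, rfl⟩
  -- orbit-stabilizer
  have hos : Nat.card (MulAction.orbit G u₀) * Nat.card (MulAction.stabilizer G u₀)
      = Nat.card G := by
    rw [← Nat.card_prod]
    exact Nat.card_congr (MulAction.orbitProdStabilizerEquivGroup G u₀)
  haveI : Nonempty ↥(MulAction.stabilizer G u₀) := ⟨1⟩
  have hSpos : 0 < Nat.card (MulAction.stabilizer G u₀) := Nat.card_pos
  show Nat.card {w // φmap T Λ v w = g} = indQ T Λ g.1
  rw [indQ, hstabV, hstabE, stabV]; simp only [stabE]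
  rw [Nat.card_congr eG, Nat.card_congr eS.symm, ← hos, Nat.card_congr eO]
  rw [Nat.mul_div_cancel _ hSpos]

theorem fib_finite (hAut : ∀ γ ∈ Λ, ∀ u w : V, T.Adj (γ u) (γ w) ↔ T.Adj u w)
    (v : VQ Λ) (h : Nat.card (T.neighborSet (Quot.out v)) ≠ 0) :
    Finite {g : EQ T Λ // tailQ T Λ g = v} := by
  haveI := (Nat.card_ne_zero.1 h).2
  exact Finite.of_surjective _ (φmap_surj T Λ hAut v)

theorem sum_indQ (hAut : ∀ γ ∈ Λ, ∀ u w : V, T.Adj (γ u) (γ w) ↔ T.Adj u w)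
    (hFin : ∀ x : V, Finite {γ : Λ // (γ : Equiv.Perm V) x = x})
    (v : VQ Λ) (h : Nat.card (T.neighborSet (Quot.out v)) ≠ 0)
    [Fintype {g : EQ T Λ // tailQ T Λ g = v}] :
    ∑ g : {g : EQ T Λ // tailQ T Λ g = v}, indQ T Λ g.1 = degQ T Λ v := by
  classical
  haveI : Finite (T.neighborSet (Quot.out v)) := (Nat.card_ne_zero.1 h).2
  haveI : Fintype (T.neighborSet (Quot.out v)) := Fintype.ofFinite _
  have key : Nat.card (T.neighborSet (Quot.out v)) =
      ∑ g : {g : EQ T Λ // tailQ T Λ g = v}, Nat.card {w // φmap T Λ v w = g} := by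
    rw [← Nat.card_congr (Equiv.sigmaFiberEquiv (φmap T Λ v)), Nat.card_eq_fintype_card,
      Fintype.card_sigma]
    exact Finset.sum_congr rfl fun g _ => Nat.card_eq_fintype_card.symm
  rw [degQ, key]
  exact Finset.sum_congr rfl fun g _ => (φmap_fiber_card T Λ hAut hFin v g).symm

theorem one_le_indQ (hAut : ∀ γ ∈ Λ, ∀ u w : V, T.Adj (γ u) (γ w) ↔ T.Adj u w)
    (hFin : ∀ x : V, Finite {γ : Λ // (γ : Equiv.Perm V) x = x})
    (hdeg : ∀ u : V, Nat.card (T.neighborSet u) ≠ 0) (e : EQ T Λ) :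
    1 ≤ indQ T Λ e := by
  have hcard := φmap_fiber_card T Λ hAut hFin (tailQ T Λ e) ⟨e, rfl⟩
  rw [← hcard]
  haveI : Finite (T.neighborSet (Quot.out (tailQ T Λ e))) := (Nat.card_ne_zero.1 (hdeg _)).2
  obtain ⟨w, hw⟩ := φmap_surj T Λ hAut (tailQ T Λ e) ⟨e, rfl⟩
  haveI : Nonempty {w // φmap T Λ (tailQ T Λ e) w = ⟨e, rfl⟩} := ⟨⟨w, hw⟩⟩
  exact Nat.card_pos

/-- Lemma 3.2. The Markov chain associated to a geometrically finite
tree lattice is positive recurrent: it admits a stationary probability measure. -/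
theorem markov_chain_positive_recurrent_of_geomFinite {V : Type*} (T : SimpleGraph V)
    (d₁ d₂ : ℕ) (hd₁ : 3 ≤ d₁) (hd₂ : 3 ≤ d₂) (hT : IsBiregularTree T d₁ d₂)
    (Λ : Subgroup (Equiv.Perm V)) (hΛ : IsTreeLattice T Λ)
    (hGF : IsGeomFinite T Λ) :
    ∃ μ : EQ T Λ → ℝ, (∀ e, 0 ≤ μ e) ∧ (∑' e : EQ T Λ, μ e) = 1 ∧
      ∀ f : EQ T Λ, (∑' e : EQ T Λ, μ e * kerP T Λ e f) = μ f := by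
  classical
  obtain ⟨hA, hFin, o, N, hN1, hNpos, hNrel, hNsum⟩ := hΛ
  have hAut : ∀ γ ∈ Λ, ∀ u w : V, T.Adj (γ u) (γ w) ↔ T.Adj u w := fun γ hγ => (hA γ hγ).1
  obtain ⟨hconn, hacyc, c, hc, hc1, hc2⟩ := hT
  have hdegV : ∀ u : V, Nat.card (T.neighborSet u) = d₁ ∨ Nat.card (T.neighborSet u) = d₂ := by
    intro u
    rcases Bool.eq_false_or_eq_true (c u) with h | h
    · exact Or.inl (hc1 u h)
    · exact Or.inr (hc2 u h)
  have hdeg0 : ∀ u : V, Nat.card (T.neighborSet u) ≠ 0 := by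
    intro u; rcases hdegV u with h | h <;> omega
  have hdeg3 : ∀ v : VQ Λ, 3 ≤ degQ T Λ v := by
    intro v; rw [degQ]; rcases hdegV (Quot.out v) with h | h <;> omega
  have hdegD : ∀ v : VQ Λ, degQ T Λ v ≤ max d₁ d₂ := by
    intro v; rw [degQ]; rcases hdegV (Quot.out v) with h | h
    · exact h ▸ le_max_left _ _
    · exact h ▸ le_max_right _ _
  set w : EQ T Λ → ℝ := fun e => (indQ T Λ e : ℝ) / N (tailQ T Λ e) with hw
  have hind1 : ∀ e, (1:ℝ) ≤ (indQ T Λ e : ℝ) := fun e => by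
    exact_mod_cast one_le_indQ T Λ hAut hFin hdeg0 e
  have hindpos : ∀ e, (0:ℝ) < indQ T Λ e := fun e => lt_of_lt_of_le one_pos (hind1 e)
  have hwpos : ∀ e, 0 < w e := fun e => div_pos (hindpos e) (hNpos _)
  haveI hFibF : ∀ v : VQ Λ, Finite {g : EQ T Λ // tailQ T Λ g = v} :=
    fun v => fib_finite T Λ hAut v (hdeg0 _)
  have hvert : ∀ v : VQ Λ, ∑' g : {g : EQ T Λ // tailQ T Λ g = v}, w g.1
      = (degQ T Λ v : ℝ) / N v := by
    intro v
    haveI := hFibF v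
    haveI : Fintype {g : EQ T Λ // tailQ T Λ g = v} := Fintype.ofFinite _
    rw [tsum_fintype]
    have hco : ∀ g : {g : EQ T Λ // tailQ T Λ g = v}, w g.1 = (indQ T Λ g.1 : ℝ) / N v := by
      intro g; rw [hw]; simp only; rw [g.2]
    rw [Finset.sum_congr rfl fun g _ => hco g, ← Finset.sum_div, ← Nat.cast_sum,
      sum_indQ T Λ hAut hFin v (hdeg0 _)]
  have hsig : Summable (fun p : Σ v : VQ Λ, {g : EQ T Λ // tailQ T Λ g = v} => w p.2.1) := by
    refine (summable_sigma_of_nonneg (fun p => (hwpos _).le)).2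
      ⟨fun v => Summable.of_finite, ?_⟩
    refine Summable.of_nonneg_of_le (fun v => tsum_nonneg fun g => (hwpos _).le)
      (fun v => ?_) (hNsum.mul_left (max d₁ d₂ : ℝ))
    rw [hvert v, div_eq_mul_inv]
    refine mul_le_mul_of_nonneg_right ?_ (inv_nonneg.2 (hNpos v).le)
    exact_mod_cast hdegD v
  have hsum : Summable w := (Equiv.sigmaFiberEquiv (tailQ T Λ)).summable_iff.1 hsig
  set Z := ∑' e : EQ T Λ, w e with hZ
  obtain ⟨F, hF0, _⟩ := hGF
  obtain ⟨v₀, hv₀⟩ := hF0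
  haveI : Finite (T.neighborSet (Quot.out v₀)) := (Nat.card_ne_zero.1 (hdeg0 _)).2
  haveI hne : Nonempty (T.neighborSet (Quot.out v₀)) := (Nat.card_ne_zero.1 (hdeg0 _)).1
  obtain ⟨w₀⟩ := hne
  have hZpos : 0 < Z :=
    lt_of_lt_of_le (hwpos (φmap T Λ v₀ w₀).1) (hsum.le_tsum _ fun j _ => (hwpos j).le)
  refine ⟨fun e => w e / Z, fun e => div_nonneg (hwpos e).le hZpos.le, ?_, ?_⟩
  · rw [tsum_div_const, ← hZ, div_self hZpos.ne']
  intro f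
  set v := tailQ T Λ f with hv
  haveI := hFibF v
  haveI : Fintype {g : EQ T Λ // tailQ T Λ g = v} := Fintype.ofFinite _
  set s : Finset (EQ T Λ) :=
    Finset.univ.image (fun g : {g : EQ T Λ // tailQ T Λ g = v} => barQ T Λ g.1) with hs
  have hzero : ∀ e ∉ s, w e / Z * kerP T Λ e f = 0 := by
    intro e he
    rcases eq_or_ne (kerP T Λ e f) 0 with h | h
    · rw [h, mul_zero]
    · exfalso
      apply he
      have hhead : headQ T Λ e = tailQ T Λ f := by
        by_contra hc'
        exact h (by rw [kerP, if_neg hc'])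
      refine Finset.mem_image.2 ⟨⟨barQ T Λ e, ?_⟩, Finset.mem_univ _, barQ_barQ T Λ e⟩
      rw [tailQ_barQ, hhead]
  have hB3 : (3:ℝ) ≤ (degQ T Λ v : ℝ) := by exact_mod_cast hdeg3 v
  have hBne : ((degQ T Λ v : ℝ) - 1) ≠ 0 := by nlinarith
  have hterm : ∀ g : {g : EQ T Λ // tailQ T Λ g = v},
      w (barQ T Λ g.1) / Z * kerP T Λ (barQ T Λ g.1) f
        = (indQ T Λ g.1 : ℝ) *
            (if f = g.1 then (indQ T Λ f : ℝ) - 1 else (indQ T Λ f : ℝ))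
          / (N v * ((degQ T Λ v : ℝ) - 1) * Z) := by
    intro g
    have hh : headQ T Λ (barQ T Λ g.1) = tailQ T Λ f := by rw [headQ_barQ, g.2]
    have hker : kerP T Λ (barQ T Λ g.1) f =
        (if f = g.1 then (indQ T Λ f : ℝ) - 1 else (indQ T Λ f : ℝ))
          / ((degQ T Λ v : ℝ) - 1) := by
      rw [kerP, if_pos hh, hh, ← hv]
      simp only [barQ_barQ]
    have hwbar : w (barQ T Λ g.1) = (indQ T Λ g.1 : ℝ) / N v := by
      rw [hw]; simp only
      rw [tailQ_barQ, hNrel g.1, deltaQ, g.2]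
      have h1 : (indQ T Λ (barQ T Λ g.1) : ℝ) ≠ 0 := (hindpos _).ne'
      have h2 : (indQ T Λ g.1 : ℝ) ≠ 0 := (hindpos _).ne'
      have h3 : N v ≠ 0 := (hNpos v).ne'
      field_simp
    rw [hker, hwbar, div_div, div_mul_div_comm, mul_right_comm (N v) Z]
  rw [tsum_eq_sum hzero, hs,
    Finset.sum_image (fun a _ b _ h => Subtype.ext (barQ_inj T Λ h)),
    Finset.sum_congr rfl fun g _ => hterm g, ← Finset.sum_div]
  have hnum : (∑ g : {g : EQ T Λ // tailQ T Λ g = v}, (indQ T Λ g.1 : ℝ) *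
      (if f = g.1 then (indQ T Λ f : ℝ) - 1 else (indQ T Λ f : ℝ)))
      = (degQ T Λ v : ℝ) * (indQ T Λ f : ℝ) - (indQ T Λ f : ℝ) := by
    have hsplit : ∀ g : {g : EQ T Λ // tailQ T Λ g = v},
        (indQ T Λ g.1 : ℝ) * (if f = g.1 then (indQ T Λ f : ℝ) - 1 else (indQ T Λ f : ℝ))
          = (indQ T Λ g.1 : ℝ) * (indQ T Λ f : ℝ)
            - (if f = g.1 then (indQ T Λ f : ℝ) else 0) := by
      intro g
      by_cases h : f = g.1
      · rw [if_pos h, if_pos h, h]; ring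
      · rw [if_neg h, if_neg h]; ring
    rw [Finset.sum_congr rfl fun g _ => hsplit g, Finset.sum_sub_distrib]
    congr 1
    · rw [← Finset.sum_mul, ← Nat.cast_sum, sum_indQ T Λ hAut hFin v (hdeg0 _)]
    · have hmem : tailQ T Λ f = v := hv.symm
      have hco : ∀ g : {g : EQ T Λ // tailQ T Λ g = v},
          (if f = g.1 then (indQ T Λ f : ℝ) else 0)
            = (if (⟨f, hmem⟩ : {g : EQ T Λ // tailQ T Λ g = v}) = g
                then (indQ T Λ f : ℝ) else 0) := by
        intro g
        exact if_congr ⟨fun h => Subtype.ext h, fun h => congrArg Subtype.val h⟩ rfl rfl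
      rw [Finset.sum_congr rfl fun g _ => hco g, Finset.sum_ite_eq, if_pos (Finset.mem_univ _)]
  rw [hnum]
  have h3 : N v ≠ 0 := (hNpos v).ne'
  rw [hw]; simp only
  rw [← hv]
  field_simp [h3, hBne, hZpos.ne']

end TreeDyn
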